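/- Let g be an arithmetic function with g(q) = 0 for all q > Q, where Q ≪ N, let f = g∗1, and let h ∈ ℕ. Then the exact identity Σ_{a≠0} W(a)·C_f(a) = Σ_{ℓ≤2h} Σ_{a≠0} W(aℓ) Σ_{q : (q,a)=1} g(ℓq) Σ_{N<ℓm≤2N, m≡a (mod q)} f(ℓm) holds, obtained by classifying each pair (a,q) according to ℓ = gcd(a,q). -/

import Mathlib

open Finset

noncomputable section

/-- `f = g ∗ 1`, i.e. `f n = ∑_{d ∣ n} g d`. -/
def star1 (g : ℕ → ℝ) (n : ℕ) : ℝ := ∑ d ∈ n.divisors, g d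

/-- The weight `W(a) = 1_{[-2h,2h]}(a) · max(2h - 3|a|, |a| - 2h)`. -/
def Wt (h : ℕ) (a : ℤ) : ℝ :=
  if |a| ≤ 2 * (h : ℤ) then max (2 * (h : ℝ) - 3 * |(a : ℝ)|) (|(a : ℝ)| - 2 * (h : ℝ)) else 0

/-- The correlation `C_f(a) = ∑_{N < n ≤ 2N} f(n) f(n-a)` (with `f` extended by `0`
to nonpositive arguments). -/
def Cf (f : ℕ → ℝ) (N : ℕ) (a : ℤ) : ℝ :=
  ∑ n ∈ Finset.Ioc (N : ℤ) (2 * (N : ℤ)), f n.toNat * f (n - a).toNat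

lemma divisors_sum_eq (g : ℕ → ℝ) (Q : ℕ) (hsupp : ∀ q : ℕ, Q < q → g q = 0)
    (k : ℕ) (hk : k ≠ 0) :
    ∑ d ∈ k.divisors, g d = ∑ q ∈ (Finset.Icc 1 Q).filter (· ∣ k), g q := by
  refine (Finset.sum_subset ?_ ?_).symm
  · intro q hq
    simp only [Finset.mem_filter, Finset.mem_Icc] at hq
    exact Nat.mem_divisors.mpr ⟨hq.2, hk⟩
  · intro q hq hnq
    rw [Nat.mem_divisors] at hq
    simp only [Finset.mem_filter, Finset.mem_Icc] at hnq
    have hq1 : 1 ≤ q := Nat.one_le_iff_ne_zero.mpr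
      (by rintro rfl; exact hk (Nat.eq_zero_of_zero_dvd hq.1))
    refine hsupp q ?_
    by_contra hc
    exact hnq ⟨⟨hq1, Nat.le_of_not_lt hc⟩, hq.1⟩

lemma step1 (g : ℕ → ℝ) (Q N h : ℕ) (hQN : Q ≤ N) (hhN : 2 * h ≤ N)
    (hsupp : ∀ q : ℕ, Q < q → g q = 0) :
    ∑ a ∈ (Finset.Icc (-(2 * (h : ℤ))) (2 * (h : ℤ))).filter (· ≠ 0), Wt h a * Cf (star1 g) N a
    = ∑ a ∈ (Finset.Icc (-(2 * (h : ℤ))) (2 * (h : ℤ))).filter (· ≠ 0),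
        ∑ n ∈ Finset.Ioc (N : ℤ) (2 * (N : ℤ)),
          ∑ q ∈ (Finset.Icc 1 Q).filter (fun q : ℕ => (q : ℤ) ∣ n - a),
            Wt h a * star1 g n.toNat * g q := by
  have hhNZ : (2 * h : ℤ) ≤ N := by exact_mod_cast hhN
  refine Finset.sum_congr rfl fun a ha => ?_
  simp only [Finset.mem_filter, Finset.mem_Icc] at ha
  rw [Cf, Finset.mul_sum]
  refine Finset.sum_congr rfl fun n hn => ?_
  rw [Finset.mem_Ioc] at hn
  have hna : (0 : ℤ) < n - a := by omega
  have hstar : star1 g (n - a).toNat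
      = ∑ q ∈ (Finset.Icc 1 Q).filter (fun q : ℕ => (q : ℤ) ∣ n - a), g q := by
    rw [star1, divisors_sum_eq g Q hsupp _ (by omega)]
    refine Finset.sum_congr ?_ fun _ _ => rfl
    refine Finset.filter_congr fun q _ => ?_
    rw [← Int.natCast_dvd_natCast, Int.toNat_of_nonneg hna.le]
  rw [hstar, Finset.mul_sum, Finset.mul_sum]
  exact Finset.sum_congr rfl fun q _ => by ring

lemma step2 (g : ℕ → ℝ) (Q N h : ℕ) (hsupp : ∀ q : ℕ, Q < q → g q = 0) (ℓ : ℕ) :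
      (∑ a ∈ (Finset.Icc (-(2 * (h : ℤ))) (2 * (h : ℤ))).filter (· ≠ 0), Wt h (a * (ℓ : ℤ)) *
          ∑ q ∈ (Finset.Icc 1 Q).filter (fun q : ℕ => Int.gcd a (q : ℤ) = 1),
            g (ℓ * q) *
              ∑ m ∈ (Finset.Icc 1 (2 * N)).filter
                  (fun m : ℕ => N < ℓ * m ∧ ℓ * m ≤ 2 * N ∧ (m : ℤ) % (q : ℤ) = a % (q : ℤ)),
                star1 g (ℓ * m))
      = ∑ a ∈ ((Finset.Icc (-(2 * (h : ℤ))) (2 * (h : ℤ))).filter (· ≠ 0)).filter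
            (fun a => |a * (ℓ : ℤ)| ≤ 2 * (h : ℤ)),
          ∑ q ∈ (Finset.Icc 1 Q).filter (fun q : ℕ => Int.gcd a (q : ℤ) = 1 ∧ ℓ * q ≤ Q),
            ∑ m ∈ (Finset.Icc 1 (2 * N)).filter
                (fun m : ℕ => N < ℓ * m ∧ ℓ * m ≤ 2 * N ∧ (q : ℤ) ∣ a - (m : ℤ)),
              Wt h (a * (ℓ : ℤ)) * g (ℓ * q) * star1 g (ℓ * m) := by
  have h1 : ∑ a ∈ (Finset.Icc (-(2 * (h : ℤ))) (2 * (h : ℤ))).filter (· ≠ 0),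
        Wt h (a * (ℓ : ℤ)) *
          ∑ q ∈ (Finset.Icc 1 Q).filter (fun q : ℕ => Int.gcd a (q : ℤ) = 1),
            g (ℓ * q) *
              ∑ m ∈ (Finset.Icc 1 (2 * N)).filter
                  (fun m : ℕ => N < ℓ * m ∧ ℓ * m ≤ 2 * N ∧ (m : ℤ) % (q : ℤ) = a % (q : ℤ)),
                star1 g (ℓ * m)
      = ∑ a ∈ ((Finset.Icc (-(2 * (h : ℤ))) (2 * (h : ℤ))).filter (· ≠ 0)).filter
            (fun a => |a * (ℓ : ℤ)| ≤ 2 * (h : ℤ)),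
        Wt h (a * (ℓ : ℤ)) *
          ∑ q ∈ (Finset.Icc 1 Q).filter (fun q : ℕ => Int.gcd a (q : ℤ) = 1),
            g (ℓ * q) *
              ∑ m ∈ (Finset.Icc 1 (2 * N)).filter
                  (fun m : ℕ => N < ℓ * m ∧ ℓ * m ≤ 2 * N ∧ (m : ℤ) % (q : ℤ) = a % (q : ℤ)),
                star1 g (ℓ * m) := by
    refine (Finset.sum_subset (Finset.filter_subset _ _) (fun a haA hna => ?_)).symm
    have hw : ¬ |a * (ℓ : ℤ)| ≤ 2 * (h : ℤ) := by
      intro hc; exact hna (Finset.mem_filter.mpr ⟨haA, hc⟩)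
    rw [Wt, if_neg hw, zero_mul]
  rw [h1]
  refine Finset.sum_congr rfl fun a ha => ?_
  -- first transform the q-summand, then restrict the q-range
  have hterm : ∀ q : ℕ, Wt h (a * (ℓ : ℤ)) *
      (g (ℓ * q) * ∑ m ∈ (Finset.Icc 1 (2 * N)).filter
          (fun m : ℕ => N < ℓ * m ∧ ℓ * m ≤ 2 * N ∧ (m : ℤ) % (q : ℤ) = a % (q : ℤ)),
        star1 g (ℓ * m))
      = ∑ m ∈ (Finset.Icc 1 (2 * N)).filter
          (fun m : ℕ => N < ℓ * m ∧ ℓ * m ≤ 2 * N ∧ (q : ℤ) ∣ a - (m : ℤ)),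
        Wt h (a * (ℓ : ℤ)) * g (ℓ * q) * star1 g (ℓ * m) := by
    intro q
    have hset : (Finset.Icc 1 (2 * N)).filter
          (fun m : ℕ => N < ℓ * m ∧ ℓ * m ≤ 2 * N ∧ (m : ℤ) % (q : ℤ) = a % (q : ℤ))
        = (Finset.Icc 1 (2 * N)).filter
          (fun m : ℕ => N < ℓ * m ∧ ℓ * m ≤ 2 * N ∧ (q : ℤ) ∣ a - (m : ℤ)) := by
      refine Finset.filter_congr fun m _ => ?_
      exact and_congr_right fun _ => and_congr_right fun _ => Int.modEq_iff_dvd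
    rw [hset, Finset.mul_sum, Finset.mul_sum]
    exact Finset.sum_congr rfl fun m _ => by ring
  rw [Finset.mul_sum]
  rw [Finset.sum_congr rfl (fun q (_ : q ∈ (Finset.Icc 1 Q).filter
      (fun q : ℕ => Int.gcd a (q : ℤ) = 1)) => hterm q)]
  refine (Finset.sum_subset (fun q hq => ?_) (fun q hq hnq => ?_)).symm
  · simp only [Finset.mem_filter, Finset.mem_Icc] at hq ⊢
    exact ⟨hq.1, hq.2.1⟩
  · simp only [Finset.mem_filter, Finset.mem_Icc] at hq hnq
    have hgz : g (ℓ * q) = 0 := by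
      refine hsupp _ ?_
      by_contra hc
      exact hnq ⟨hq.1, hq.2, Nat.le_of_not_lt hc⟩
    exact Finset.sum_eq_zero fun m _ => by rw [hgz]; ring

lemma step3 (g : ℕ → ℝ) (Q N h : ℕ) (hQN : Q ≤ N) (hhN : 2 * h ≤ N) :
    (∑ a ∈ (Finset.Icc (-(2 * (h : ℤ))) (2 * (h : ℤ))).filter (· ≠ 0),
      ∑ n ∈ Finset.Ioc (N : ℤ) (2 * (N : ℤ)),
        ∑ q ∈ (Finset.Icc 1 Q).filter (fun q : ℕ => (q : ℤ) ∣ n - a),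
          Wt h a * star1 g n.toNat * g q)
    = ∑ ℓ ∈ Finset.Icc 1 (2 * h),
        ∑ a ∈ ((Finset.Icc (-(2 * (h : ℤ))) (2 * (h : ℤ))).filter (· ≠ 0)).filter
            (fun a => |a * (ℓ : ℤ)| ≤ 2 * (h : ℤ)),
          ∑ q ∈ (Finset.Icc 1 Q).filter (fun q : ℕ => Int.gcd a (q : ℤ) = 1 ∧ ℓ * q ≤ Q),
            ∑ m ∈ (Finset.Icc 1 (2 * N)).filter
                (fun m : ℕ => N < ℓ * m ∧ ℓ * m ≤ 2 * N ∧ (q : ℤ) ∣ a - (m : ℤ)),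
              Wt h (a * (ℓ : ℤ)) * g (ℓ * q) * star1 g (ℓ * m) := by
  have hhNZ : (2 * h : ℤ) ≤ N := by exact_mod_cast hhN
  rw [show (∑ a ∈ (Finset.Icc (-(2 * (h : ℤ))) (2 * (h : ℤ))).filter (· ≠ 0),
      ∑ n ∈ Finset.Ioc (N : ℤ) (2 * (N : ℤ)),
        ∑ q ∈ (Finset.Icc 1 Q).filter (fun q : ℕ => (q : ℤ) ∣ n - a),
          Wt h a * star1 g n.toNat * g q)
    = ∑ p ∈ ((Finset.Icc (-(2 * (h : ℤ))) (2 * (h : ℤ))).filter (· ≠ 0)).sigma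
        (fun a => (Finset.Ioc (N : ℤ) (2 * (N : ℤ))).sigma
          (fun n => (Finset.Icc 1 Q).filter (fun q : ℕ => (q : ℤ) ∣ n - a))),
        Wt h p.1 * star1 g p.2.1.toNat * g p.2.2 from by
      rw [Finset.sum_sigma]
      exact Finset.sum_congr rfl fun a _ => by rw [Finset.sum_sigma]]
  rw [show (∑ ℓ ∈ Finset.Icc 1 (2 * h),
        ∑ a ∈ ((Finset.Icc (-(2 * (h : ℤ))) (2 * (h : ℤ))).filter (· ≠ 0)).filter
            (fun a => |a * (ℓ : ℤ)| ≤ 2 * (h : ℤ)),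
          ∑ q ∈ (Finset.Icc 1 Q).filter (fun q : ℕ => Int.gcd a (q : ℤ) = 1 ∧ ℓ * q ≤ Q),
            ∑ m ∈ (Finset.Icc 1 (2 * N)).filter
                (fun m : ℕ => N < ℓ * m ∧ ℓ * m ≤ 2 * N ∧ (q : ℤ) ∣ a - (m : ℤ)),
              Wt h (a * (ℓ : ℤ)) * g (ℓ * q) * star1 g (ℓ * m))
    = ∑ p ∈ (Finset.Icc 1 (2 * h)).sigma
        (fun ℓ => (((Finset.Icc (-(2 * (h : ℤ))) (2 * (h : ℤ))).filter (· ≠ 0)).filter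
            (fun a => |a * (ℓ : ℤ)| ≤ 2 * (h : ℤ))).sigma
          (fun a => ((Finset.Icc 1 Q).filter
              (fun q : ℕ => Int.gcd a (q : ℤ) = 1 ∧ ℓ * q ≤ Q)).sigma
            (fun q => (Finset.Icc 1 (2 * N)).filter
              (fun m : ℕ => N < ℓ * m ∧ ℓ * m ≤ 2 * N ∧ (q : ℤ) ∣ a - (m : ℤ))))),
        Wt h (p.2.1 * (p.1 : ℤ)) * g (p.1 * p.2.2.1) * star1 g (p.1 * p.2.2.2) from by
      rw [Finset.sum_sigma]
      refine Finset.sum_congr rfl fun ℓ _ => ?_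
      rw [Finset.sum_sigma]
      exact Finset.sum_congr rfl fun a _ => by rw [Finset.sum_sigma]]
  refine Finset.sum_nbij'
    (i := fun p : Σ _ : ℤ, Σ _ : ℤ, ℕ =>
      (⟨Int.gcd p.1 (p.2.2 : ℤ), p.1 / (Int.gcd p.1 (p.2.2 : ℤ) : ℤ),
        p.2.2 / Int.gcd p.1 (p.2.2 : ℤ), p.2.1.toNat / Int.gcd p.1 (p.2.2 : ℤ)⟩
        : Σ _ : ℕ, Σ _ : ℤ, Σ _ : ℕ, ℕ))
    (j := fun p : Σ _ : ℕ, Σ _ : ℤ, Σ _ : ℕ, ℕ =>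
      (⟨p.2.1 * (p.1 : ℤ), ((p.1 * p.2.2.2 : ℕ) : ℤ), p.1 * p.2.2.1⟩ : Σ _ : ℤ, Σ _ : ℤ, ℕ))
    ?_ ?_ ?_ ?_ ?_
  · -- hi : forward membership
    rintro ⟨a, n, q⟩ hp
    simp only [Finset.mem_sigma, Finset.mem_filter, Finset.mem_Icc, Finset.mem_Ioc] at hp
    obtain ⟨⟨⟨haL, haU⟩, ha0⟩, ⟨hnL, hnU⟩, ⟨hq1, hqQ⟩, hdvd⟩ := hp
    have hlpos : 0 < Int.gcd a (q : ℤ) := Int.gcd_pos_of_ne_zero_left _ ha0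
    have hl0 : (Int.gcd a (q : ℤ) : ℤ) ≠ 0 := by exact_mod_cast hlpos.ne'
    have hla : (Int.gcd a (q : ℤ) : ℤ) ∣ a := Int.gcd_dvd_left _ _
    have hlq : Int.gcd a (q : ℤ) ∣ q := Int.natCast_dvd_natCast.mp (Int.gcd_dvd_right _ _)
    have hma : a / (Int.gcd a (q : ℤ) : ℤ) * (Int.gcd a (q : ℤ) : ℤ) = a :=
      Int.ediv_mul_cancel hla
    have hldn : (Int.gcd a (q : ℤ) : ℤ) ∣ n := by
      have h1 : (Int.gcd a (q : ℤ) : ℤ) ∣ n - a :=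
        dvd_trans (Int.natCast_dvd_natCast.mpr hlq) hdvd
      simpa using dvd_add h1 hla
    have hnt : (n.toNat : ℤ) = n := Int.toNat_of_nonneg (by omega)
    have hldnn : Int.gcd a (q : ℤ) ∣ n.toNat :=
      Int.natCast_dvd_natCast.mp (by rw [hnt]; exact hldn)
    have hlmn : Int.gcd a (q : ℤ) * (n.toNat / Int.gcd a (q : ℤ)) = n.toNat :=
      Nat.mul_div_cancel' hldnn
    have hlqq : Int.gcd a (q : ℤ) * (q / Int.gcd a (q : ℤ)) = q := Nat.mul_div_cancel' hlq
    have habs : |a| ≤ 2 * (h : ℤ) := abs_le.mpr ⟨haL, haU⟩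
    have hl2h : Int.gcd a (q : ℤ) ≤ 2 * h := by
      have : (Int.gcd a (q : ℤ) : ℤ) ≤ |a| :=
        Int.le_of_dvd (abs_pos.mpr ha0) ((dvd_abs _ _).mpr hla)
      exact_mod_cast le_trans this habs
    have habs' : |a / (Int.gcd a (q : ℤ) : ℤ)| ≤ 2 * (h : ℤ) :=
      le_trans (Int.abs_ediv_le_abs a _) habs
    have hntle : n.toNat ≤ 2 * N := by omega
    have hntpos : 1 ≤ n.toNat := by omega
    simp only [Finset.mem_sigma, Finset.mem_filter, Finset.mem_Icc, Finset.mem_Ioc]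
    refine ⟨⟨hlpos, hl2h⟩,
        ⟨⟨⟨(abs_le.mp habs').1, (abs_le.mp habs').2⟩, ?_⟩, by rw [hma]; exact habs⟩,
        ⟨⟨Nat.div_pos (Nat.le_of_dvd (by omega) hlq) hlpos,
          le_trans (Nat.div_le_self _ _) hqQ⟩, ?_, by rw [hlqq]; exact hqQ⟩,
        ⟨Nat.div_pos (Nat.le_of_dvd (by omega) hldnn) hlpos,
          le_trans (Nat.div_le_self _ _) hntle⟩,
        by rw [hlmn]; omega, by rw [hlmn]; omega, ?_⟩
    · intro h0
      apply ha0
      rw [← hma, h0, zero_mul]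
    · rw [Int.natCast_div]
      exact Int.gcd_div_gcd_div_gcd hlpos
    · refine (mul_dvd_mul_iff_left hl0).mp ?_
      have e1 : (Int.gcd a (q : ℤ) : ℤ) * ((q / Int.gcd a (q : ℤ) : ℕ) : ℤ) = q := by
        exact_mod_cast hlqq
      have e2 : (Int.gcd a (q : ℤ) : ℤ) * (a / (Int.gcd a (q : ℤ) : ℤ)) = a := by
        rw [mul_comm]; exact hma
      have e3 : (Int.gcd a (q : ℤ) : ℤ)
          * ((n.toNat / Int.gcd a (q : ℤ) : ℕ) : ℤ) = n := by
        rw [← hnt]; exact_mod_cast hlmn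
      rw [mul_sub, e1, e2, e3]
      have : (q : ℤ) ∣ -(n - a) := dvd_neg.mpr hdvd
      simpa using this
  · -- hj : backward membership
    rintro ⟨ℓ, a, q, m⟩ hp
    simp only [Finset.mem_sigma, Finset.mem_filter, Finset.mem_Icc, Finset.mem_Ioc] at hp
    obtain ⟨⟨hl1, hl2h⟩, ⟨⟨⟨haL, haU⟩, ha0⟩, habs⟩, ⟨⟨hq1, hqQ⟩, hg1, hlqQ⟩,
      ⟨hm1, hm2N⟩, hNlm, hlm2N, hdvd⟩ := hp
    simp only [Finset.mem_sigma, Finset.mem_filter, Finset.mem_Icc, Finset.mem_Ioc]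
    refine ⟨⟨⟨(abs_le.mp habs).1, (abs_le.mp habs).2⟩,
        mul_ne_zero ha0 (Int.natCast_ne_zero.mpr (by omega))⟩,
        ⟨by exact_mod_cast hNlm, by exact_mod_cast hlm2N⟩,
        ⟨Nat.one_le_iff_ne_zero.mpr (Nat.mul_ne_zero (by omega) (by omega)), hlqQ⟩, ?_⟩
    push_cast
    rw [show (ℓ : ℤ) * m - a * ℓ = (ℓ : ℤ) * ((m : ℤ) - a) by ring]
    refine mul_dvd_mul_left _ ?_
    have : (q : ℤ) ∣ -(a - m) := dvd_neg.mpr hdvd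
    simpa using this
  · -- left_inv
    rintro ⟨a, n, q⟩ hp
    simp only [Finset.mem_sigma, Finset.mem_filter, Finset.mem_Icc, Finset.mem_Ioc] at hp
    obtain ⟨⟨⟨haL, haU⟩, ha0⟩, ⟨hnL, hnU⟩, ⟨hq1, hqQ⟩, hdvd⟩ := hp
    have hla : (Int.gcd a (q : ℤ) : ℤ) ∣ a := Int.gcd_dvd_left _ _
    have hlq : Int.gcd a (q : ℤ) ∣ q := Int.natCast_dvd_natCast.mp (Int.gcd_dvd_right _ _)
    have hldn : (Int.gcd a (q : ℤ) : ℤ) ∣ n := by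
      have h1 : (Int.gcd a (q : ℤ) : ℤ) ∣ n - a :=
        dvd_trans (Int.natCast_dvd_natCast.mpr hlq) hdvd
      simpa using dvd_add h1 hla
    have hnt : (n.toNat : ℤ) = n := Int.toNat_of_nonneg (by omega)
    have hldnn : Int.gcd a (q : ℤ) ∣ n.toNat :=
      Int.natCast_dvd_natCast.mp (by rw [hnt]; exact hldn)
    dsimp only
    rw [Int.ediv_mul_cancel hla, Nat.mul_div_cancel' hlq, Nat.mul_div_cancel' hldnn, hnt]
  · -- right_inv
    rintro ⟨ℓ, a, q, m⟩ hp
    simp only [Finset.mem_sigma, Finset.mem_filter, Finset.mem_Icc, Finset.mem_Ioc] at hp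
    obtain ⟨⟨hl1, hl2h⟩, ⟨⟨⟨haL, haU⟩, ha0⟩, habs⟩, ⟨⟨hq1, hqQ⟩, hg1, hlqQ⟩,
      ⟨hm1, hm2N⟩, hNlm, hlm2N, hdvd⟩ := hp
    have hlpos : 0 < ℓ := by omega
    have hl0 : (ℓ : ℤ) ≠ 0 := by exact_mod_cast hlpos.ne'
    have hgl : Int.gcd (a * (ℓ : ℤ)) ((ℓ * q : ℕ) : ℤ) = ℓ := by
      push_cast
      rw [mul_comm (ℓ : ℤ) (q : ℤ), Int.gcd_mul_right, hg1, one_mul, Int.natAbs_natCast]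
    dsimp only
    rw [hgl, Int.mul_ediv_cancel _ hl0, Int.toNat_natCast,
      Nat.mul_div_cancel_left _ hlpos, Nat.mul_div_cancel_left _ hlpos]
  · -- values
    rintro ⟨a, n, q⟩ hp
    simp only [Finset.mem_sigma, Finset.mem_filter, Finset.mem_Icc, Finset.mem_Ioc] at hp
    obtain ⟨⟨⟨haL, haU⟩, ha0⟩, ⟨hnL, hnU⟩, ⟨hq1, hqQ⟩, hdvd⟩ := hp
    have hla : (Int.gcd a (q : ℤ) : ℤ) ∣ a := Int.gcd_dvd_left _ _
    have hlq : Int.gcd a (q : ℤ) ∣ q := Int.natCast_dvd_natCast.mp (Int.gcd_dvd_right _ _)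
    have hldn : (Int.gcd a (q : ℤ) : ℤ) ∣ n := by
      have h1 : (Int.gcd a (q : ℤ) : ℤ) ∣ n - a :=
        dvd_trans (Int.natCast_dvd_natCast.mpr hlq) hdvd
      simpa using dvd_add h1 hla
    have hnt : (n.toNat : ℤ) = n := Int.toNat_of_nonneg (by omega)
    have hldnn : Int.gcd a (q : ℤ) ∣ n.toNat :=
      Int.natCast_dvd_natCast.mp (by rw [hnt]; exact hldn)
    rw [Int.ediv_mul_cancel hla, Nat.mul_div_cancel' hlq, Nat.mul_div_cancel' hldnn]
    ring

theorem statement10 (g : ℕ → ℝ) (Q N h : ℕ) (hQN : Q ≤ N) (hhN : 2 * h ≤ N)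
    (hsupp : ∀ q : ℕ, Q < q → g q = 0) :
    ∑ a ∈ (Finset.Icc (-(2 * (h : ℤ))) (2 * (h : ℤ))).filter (· ≠ 0),
        Wt h a * Cf (star1 g) N a
    = ∑ ℓ ∈ Finset.Icc 1 (2 * h),
        ∑ a ∈ (Finset.Icc (-(2 * (h : ℤ))) (2 * (h : ℤ))).filter (· ≠ 0),
          Wt h (a * (ℓ : ℤ)) *
            ∑ q ∈ (Finset.Icc 1 Q).filter (fun q : ℕ => Int.gcd a (q : ℤ) = 1),
              g (ℓ * q) *
                ∑ m ∈ (Finset.Icc 1 (2 * N)).filter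
                    (fun m : ℕ => N < ℓ * m ∧ ℓ * m ≤ 2 * N ∧ (m : ℤ) % (q : ℤ) = a % (q : ℤ)),
                  star1 g (ℓ * m) := by
  rw [step1 g Q N h hQN hhN hsupp, step3 g Q N h hQN hhN]
  exact Finset.sum_congr rfl fun ℓ _ => (step2 g Q N h hsupp ℓ).symm
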